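/- arXiv:1108.0233 — 2 statements merged into one kernel-verified Lean document; each statement's English description precedes it below -/
import Mathlib

section
/- For Q-tuples of real numbers, the sorting map ξ : Q_Q(ℝ) → {(s_1,...,s_Q) ∈ ℝ^Q : s_1 ≤ ⋯ ≤ s_Q}, sending an unordered tuple to its nondecreasing rearrangement, is an isometry: |ξ(p) − ξ(q)| = G(p,q) for all p, q ∈ Q_Q(ℝ). -/
open Finset

/-- The metric on unordered `Q`-tuples of reals. -/
noncomputable def G1 {Q : ℕ} (p q : Fin Q → ℝ) : ℝ :=
  Finset.univ.inf' Finset.univ_nonempty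
    (fun σ : Equiv.Perm (Fin Q) => Real.sqrt (∑ i, (p i - q (σ i)) ^ 2))

/-- The sorting map: the nondecreasing rearrangement of a `Q`-tuple of reals. -/
noncomputable def ξsort {Q : ℕ} (p : Fin Q → ℝ) : Fin Q → ℝ := p ∘ Tuple.sort p

lemma key_rearrange {Q : ℕ} (a b : Fin Q → ℝ) (ha : Monotone a) (hb : Monotone b)
    (τ : Equiv.Perm (Fin Q)) :
    ∑ i, (a i - b i) ^ 2 ≤ ∑ i, (a i - b (τ i)) ^ 2 := by
  have hmono : Monovary a b := fun i j h => ha (hb.reflect_lt h).le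
  have h1 : ∑ i, a i * b (τ i) ≤ ∑ i, a i * b i := by
    simpa [smul_eq_mul] using hmono.sum_smul_comp_perm_le_sum_smul (σ := τ)
  have h2 : ∑ i, (b (τ i)) ^ 2 = ∑ i, (b i) ^ 2 :=
    Equiv.sum_comp τ (fun i => (b i) ^ 2)
  have expand : ∀ (c : Fin Q → ℝ), ∑ i, (a i - c i) ^ 2
      = ∑ i, (a i) ^ 2 - 2 * ∑ i, a i * c i + ∑ i, (c i) ^ 2 := by
    intro c
    have h : ∀ i, (a i - c i) ^ 2 = (a i) ^ 2 - 2 * (a i * c i) + (c i) ^ 2 :=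
      fun i => by ring
    simp_rw [h, Finset.sum_add_distrib, Finset.sum_sub_distrib, ← Finset.mul_sum]
  rw [expand b, expand (fun i => b (τ i))]
  rw [h2]
  linarith

/-- The sorting map `ξ : Q_Q(ℝ) → {s₁ ≤ ⋯ ≤ s_Q} ⊂ ℝ^Q` is an isometry:
`|ξ(p) − ξ(q)| = G(p,q)`, and `ξ(p)` is indeed nondecreasing. -/
theorem stmt_1 (Q : ℕ) (p q : Fin Q → ℝ) :
    Monotone (ξsort p) ∧
    Real.sqrt (∑ i, (ξsort p i - ξsort q i) ^ 2) = G1 p q := by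
  have hp : Monotone (ξsort p) := Tuple.monotone_sort p
  have hq : Monotone (ξsort q) := Tuple.monotone_sort q
  refine ⟨hp, ?_⟩
  set sp := Tuple.sort p
  set sq := Tuple.sort q
  apply le_antisymm
  · apply Finset.le_inf'
    intro σ _
    apply Real.sqrt_le_sqrt
    have := key_rearrange (ξsort p) (ξsort q) hp hq (sq.symm * σ * sp)
    calc ∑ i, (ξsort p i - ξsort q i) ^ 2
        ≤ ∑ i, (ξsort p i - ξsort q ((sq.symm * σ * sp) i)) ^ 2 := this
      _ = ∑ i, (p (sp i) - q (σ (sp i))) ^ 2 := by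
          simp [ξsort, Equiv.Perm.mul_apply, sp, sq]
      _ = ∑ i, (p i - q (σ i)) ^ 2 := Equiv.sum_comp sp (fun i => (p i - q (σ i)) ^ 2)
  · have : ∑ i, (p i - q ((sq * sp.symm) i)) ^ 2 = ∑ i, (ξsort p i - ξsort q i) ^ 2 := by
      rw [← Equiv.sum_comp sp (fun i => (p i - q ((sq * sp.symm) i)) ^ 2)]
      simp [ξsort, Equiv.Perm.mul_apply, sp, sq]
    calc G1 p q ≤ Real.sqrt (∑ i, (p i - q ((sq * sp.symm) i)) ^ 2) :=
          Finset.inf'_le _ (Finset.mem_univ _)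
      _ = _ := by rw [this]
end

section
/- Suppose n ≥ 2 and Q ≥ 2. Given any finite set of nonzero direction vectors v_1,...,v_ℓ ∈ S^{n−1} with ℓ ≤ Q(Q−1), there exists an orthonormal basis {e_1,...,e_n} of ℝⁿ and an angle θ₀ = arcsin(1/√n)·(1/2)^{(n−1)(Q(Q−1)−1)} > 0 such that |⟨e_α, v_b⟩| ≥ sin θ₀ for all α ∈ {1,...,n} and b ∈ {1,...,ℓ}. -/
open scoped RealInnerProductSpace
open Real

variable {E : Type*} [NormedAddCommGroup E] [InnerProductSpace ℝ E]

/-- rotation-ish linear map in the plane spanned by `f₁, f₂` -/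
noncomputable def rotL (f₁ f₂ : E) (t : ℝ) : E →ₗ[ℝ] E where
  toFun z := z + ((Real.cos t - 1) * ⟪f₁, z⟫ - Real.sin t * ⟪f₂, z⟫) • f₁
      + (Real.sin t * ⟪f₁, z⟫ + (Real.cos t - 1) * ⟪f₂, z⟫) • f₂
  map_add' z w := by
    simp only [inner_add_right]
    module
  map_smul' c z := by
    simp only [inner_smul_right, RingHom.id_apply]
    module

lemma rotL_apply (f₁ f₂ : E) (t : ℝ) (z : E) :
    rotL f₁ f₂ t z = z + ((Real.cos t - 1) * ⟪f₁, z⟫ - Real.sin t * ⟪f₂, z⟫) • f₁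
      + (Real.sin t * ⟪f₁, z⟫ + (Real.cos t - 1) * ⟪f₂, z⟫) • f₂ := rfl

lemma rotL_inner (f₁ f₂ : E) (h1 : ‖f₁‖ = 1) (h2 : ‖f₂‖ = 1) (h12 : ⟪f₁, f₂⟫ = 0) (t : ℝ)
    (z w : E) : ⟪rotL f₁ f₂ t z, rotL f₁ f₂ t w⟫ = ⟪z, w⟫ := by
  have e1 : ⟪f₁, f₁⟫ = 1 := by rw [real_inner_self_eq_norm_sq, h1]; norm_num
  have e2 : ⟪f₂, f₂⟫ = 1 := by rw [real_inner_self_eq_norm_sq, h2]; norm_num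
  have h21 : ⟪f₂, f₁⟫ = 0 := by rw [real_inner_comm]; exact h12
  have c1z : ⟪z, f₁⟫ = ⟪f₁, z⟫ := real_inner_comm _ _
  have c2z : ⟪z, f₂⟫ = ⟪f₂, z⟫ := real_inner_comm _ _
  simp only [rotL_apply, inner_add_left, inner_add_right, real_inner_smul_left,
    real_inner_smul_right, e1, e2, h12, h21, c1z, c2z]
  linear_combination (⟪f₁, z⟫ * ⟪f₁, w⟫ + ⟪f₂, z⟫ * ⟪f₂, w⟫) * Real.sin_sq_add_cos_sq t

lemma bessel2 (f₁ f₂ z : E) (h1 : ‖f₁‖ = 1) (h2 : ‖f₂‖ = 1) (h12 : ⟪f₁, f₂⟫ = 0) :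
    ⟪f₁, z⟫ ^ 2 + ⟪f₂, z⟫ ^ 2 ≤ ‖z‖ ^ 2 := by
  have h21 : ⟪f₂, f₁⟫ = 0 := by rw [real_inner_comm]; exact h12
  have key := sq_nonneg ‖z - (⟪f₁, z⟫ • f₁ + ⟪f₂, z⟫ • f₂)‖
  rw [norm_sub_sq_real, norm_add_sq_real] at key
  simp only [inner_add_right, real_inner_smul_left, real_inner_smul_right, norm_smul,
    real_inner_comm z f₁, real_inner_comm z f₂, h12, h21, Real.norm_eq_abs] at key
  rw [h1, h2] at key
  rw [real_inner_comm z f₁, real_inner_comm z f₂]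
  nlinarith [key, sq_abs (⟪z, f₁⟫ : ℝ), sq_abs (⟪z, f₂⟫ : ℝ)]

lemma rotL_inner_self (f₁ f₂ : E) (h1 : ‖f₁‖ = 1) (h2 : ‖f₂‖ = 1) (h12 : ⟪f₁, f₂⟫ = 0)
    (t : ℝ) (z : E) : Real.cos t * ‖z‖ ^ 2 ≤ ⟪z, rotL f₁ f₂ t z⟫ := by
  have hb := bessel2 f₁ f₂ z h1 h2 h12
  have c1z : ⟪z, f₁⟫ = ⟪f₁, z⟫ := real_inner_comm _ _
  have c2z : ⟪z, f₂⟫ = ⟪f₂, z⟫ := real_inner_comm _ _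
  have hct : Real.cos t ≤ 1 := Real.cos_le_one t
  rw [rotL_apply]
  simp only [inner_add_right, real_inner_smul_right, c1z, c2z, real_inner_self_eq_norm_sq]
  nlinarith [hb, hct]

lemma cost {z z' w : E} (hz : ‖z‖ = 1) (hz' : ‖z'‖ = 1) (hw : ‖w‖ = 1) {θ t : ℝ}
    (hθ0 : 0 ≤ θ) (hθ : θ ≤ π / 2) (ht0 : 0 ≤ t) (ht : t ≤ π / 2)
    (hC : Real.cos t ≤ ⟪z, z'⟫) (hA : Real.sin θ ≤ |⟪w, z⟫|) :
    Real.sin (θ - t) ≤ |⟪w, z'⟫| := by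
  rcases lt_or_ge θ t with h | h
  · have : Real.sin (θ - t) ≤ 0 := by
      apply Real.sin_nonpos_of_nonpos_of_neg_pi_le (by linarith)
      have := Real.pi_gt_three
      linarith
    exact this.trans (abs_nonneg _)
  · set A : ℝ := ⟪w, z⟫ with hAdef
    set B : ℝ := ⟪w, z'⟫ with hBdef
    set C : ℝ := ⟪z, z'⟫ with hCdef
    have hcos0 : (0:ℝ) ≤ Real.cos t := Real.cos_nonneg_of_mem_Icc ⟨by linarith, ht⟩
    have hcosθ0 : (0:ℝ) ≤ Real.cos θ := Real.cos_nonneg_of_mem_Icc ⟨by linarith, hθ⟩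
    have hsint0 : (0:ℝ) ≤ Real.sin t := Real.sin_nonneg_of_nonneg_of_le_pi ht0
      (by have := Real.pi_gt_three; linarith)
    have hsinθ0 : (0:ℝ) ≤ Real.sin θ := Real.sin_nonneg_of_nonneg_of_le_pi hθ0
      (by have := Real.pi_gt_three; linarith)
    have hC0 : (0:ℝ) ≤ C := le_trans hcos0 hC
    have hC1 : C ≤ 1 := by
      have := real_inner_le_norm z z'
      rw [hz, hz'] at this; simpa using this
    have hzz : ⟪z, z⟫ = (1:ℝ) := by rw [real_inner_self_eq_norm_sq, hz]; norm_num
    -- q := z' - C • z  is orthogonal to z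
    have hzq : ⟪z, z' - C • z⟫ = (0:ℝ) := by
      rw [inner_sub_right, real_inner_smul_right, hzz, hCdef]; ring_nf
    have hq2 : ‖z' - C • z‖ ^ 2 = 1 - C ^ 2 := by
      rw [norm_sub_sq_real, real_inner_smul_right, norm_smul, hz', hz,
        real_inner_comm z z', ← hCdef]
      simp [Real.norm_eq_abs, sq_abs]
      ring
    have hw2 : ‖w - A • z‖ ^ 2 = 1 - A ^ 2 := by
      rw [norm_sub_sq_real, real_inner_smul_right, norm_smul, hw, hz, ← hAdef]
      simp [Real.norm_eq_abs, sq_abs]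
      ring
    have hkey : ⟪w - A • z, z' - C • z⟫ = B - C * A := by
      rw [inner_sub_left, real_inner_smul_left, hzq, inner_sub_right,
        real_inner_smul_right, ← hBdef, ← hAdef]
      ring
    have hCS : |B - C * A| ≤ ‖w - A • z‖ * ‖z' - C • z‖ := by
      rw [← hkey]; exact abs_real_inner_le_norm _ _
    have hn1 : ‖w - A • z‖ ≤ Real.cos θ := by
      apply le_of_pow_le_pow_left₀ two_ne_zero hcosθ0
      rw [hw2]
      have : Real.sin θ ^ 2 ≤ A ^ 2 := by
        rw [← sq_abs A]
        exact pow_le_pow_left₀ hsinθ0 hA 2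
      have hc2 : Real.cos θ ^ 2 = 1 - Real.sin θ ^ 2 := Real.cos_sq' θ
      linarith
    have hn2 : ‖z' - C • z‖ ≤ Real.sin t := by
      apply le_of_pow_le_pow_left₀ two_ne_zero hsint0
      rw [hq2]
      have : Real.cos t ^ 2 ≤ C ^ 2 := pow_le_pow_left₀ hcos0 hC 2
      have hs2 : Real.sin t ^ 2 = 1 - Real.cos t ^ 2 := Real.sin_sq t
      linarith
    have hprod : |B - C * A| ≤ Real.cos θ * Real.sin t :=
      hCS.trans (mul_le_mul hn1 hn2 (norm_nonneg _) hcosθ0)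
    have h2 : Real.sin θ * Real.cos t ≤ |A| * C :=
      mul_le_mul hA hC hcos0 (abs_nonneg A)
    have hcomm : C * |A| = |A| * C := mul_comm _ _
    have h3 : C * |A| - |B| ≤ |C * A - B| := by
      calc C * |A| - |B| = |C * A| - |B| := by
            rw [abs_mul, abs_of_nonneg hC0]
        _ ≤ |C * A - B| := abs_sub_abs_le_abs_sub _ _
    rw [Real.sin_sub]
    rw [abs_sub_comm] at hprod
    linarith

lemma exists_rot {n : ℕ} (f₁ f₂ : EuclideanSpace ℝ (Fin n)) (h1 : ‖f₁‖ = 1) (h2 : ‖f₂‖ = 1)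
    (h12 : ⟪f₁, f₂⟫ = 0) (t : ℝ) :
    ∃ R : EuclideanSpace ℝ (Fin n) ≃ₗᵢ[ℝ] EuclideanSpace ℝ (Fin n),
      ∀ z, R z = rotL f₁ f₂ t z := by
  refine ⟨(LinearMap.isometryOfInner (rotL f₁ f₂ t)
    (rotL_inner f₁ f₂ h1 h2 h12 t)).toLinearIsometryEquiv rfl, fun z => ?_⟩
  rw [LinearIsometry.toLinearIsometryEquiv_apply]
  simp [LinearMap.coe_isometryOfInner]

lemma sin_mono {x y : ℝ} (hx : -(π/2) ≤ x) (hy : y ≤ π/2) (hxy : x ≤ y) :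
    Real.sin x ≤ Real.sin y :=
  Real.strictMonoOn_sin.monotoneOn ⟨hx, hxy.trans hy⟩ ⟨hx.trans hxy, hy⟩ hxy

lemma inner_single_one {n : ℕ} (j : Fin n) (z : EuclideanSpace ℝ (Fin n)) :
    ⟪EuclideanSpace.single j (1:ℝ), z⟫ = z j := by
  simp [EuclideanSpace.inner_single_left]

lemma oneStep {n m : ℕ} {θ : ℝ} (hθ0 : 0 < θ) (hθ : θ ≤ π / 2)
    (y : Fin m → EuclideanSpace ℝ (Fin n)) (x : EuclideanSpace ℝ (Fin n))
    (hy1 : ∀ b, ‖y b‖ = 1) (hx1 : ‖x‖ = 1) (s : Finset (Fin n)) (k : Fin n)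
    (hy : ∀ b j, Real.sin θ ≤ |y b j|) (hx : ∀ j ∈ s, Real.sin θ ≤ |x j|) :
    ∃ R : EuclideanSpace ℝ (Fin n) ≃ₗᵢ[ℝ] EuclideanSpace ℝ (Fin n),
      (∀ b j, Real.sin (θ / 2) ≤ |R (y b) j|) ∧
      (∀ j ∈ insert k s, Real.sin (θ / 2) ≤ |R x j|) := by
  have hpi := Real.pi_gt_three
  have hsinhalf0 : 0 ≤ Real.sin (θ/2) :=
    Real.sin_nonneg_of_nonneg_of_le_pi (by linarith) (by linarith)
  have hhalf : Real.sin (θ/2) ≤ Real.sin θ := sin_mono (by linarith) hθ (by linarith)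
  rcases le_or_gt (Real.sin (θ/2)) (|x k|) with hk | hk
  · refine ⟨LinearIsometryEquiv.refl ℝ _, fun b j => ?_, fun j hj => ?_⟩
    · simpa using hhalf.trans (hy b j)
    · rcases Finset.mem_insert.mp hj with rfl | hj
      · simpa using hk
      · simpa using hhalf.trans (hx j hj)
  · set a : ℝ := x k with hadef
    have ha1 : |a| < 1 := lt_of_lt_of_le hk (Real.sin_le_one _)
    set f₁ : EuclideanSpace ℝ (Fin n) := EuclideanSpace.single k (1:ℝ) with hf1def
    have hf1 : ‖f₁‖ = 1 := by simp [hf1def]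
    have hinner_f1x : ⟪f₁, x⟫ = a := inner_single_one k x
    have hf1f1 : ⟪f₁, f₁⟫ = (1:ℝ) := by rw [real_inner_self_eq_norm_sq, hf1]; norm_num
    have hb2 : (0:ℝ) < 1 - a^2 := by nlinarith [sq_abs a, abs_nonneg a]
    set b : ℝ := Real.sqrt (1 - a^2) with hbdef
    have hb0 : 0 < b := Real.sqrt_pos.mpr hb2
    have hbsq : b^2 = 1 - a^2 := Real.sq_sqrt hb2.le
    set u : EuclideanSpace ℝ (Fin n) := b⁻¹ • (x - a • f₁) with hudef
    have hfu : ⟪f₁, u⟫ = 0 := by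
      rw [hudef, real_inner_smul_right, inner_sub_right, real_inner_smul_right,
        hinner_f1x, hf1f1]
      ring
    have hxx : ⟪x, x⟫ = (1:ℝ) := by rw [real_inner_self_eq_norm_sq, hx1]; norm_num
    have hxf1 : ⟪x, f₁⟫ = a := by rw [real_inner_comm]; exact hinner_f1x
    have hnorm_sub : ‖x - a • f₁‖^2 = 1 - a^2 := by
      rw [norm_sub_sq_real, real_inner_smul_right, norm_smul, hx1, hf1, hxf1,
        Real.norm_eq_abs]
      rw [mul_one, one_pow, sq_abs]
      ring
    have hnorm_sub' : ‖x - a • f₁‖ = b := by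
      rw [hbdef, ← hnorm_sub, Real.sqrt_sq (norm_nonneg _)]
    have hu1 : ‖u‖ = 1 := by
      rw [hudef, norm_smul, hnorm_sub', Real.norm_eq_abs,
        abs_of_pos (inv_pos.mpr hb0)]
      field_simp
    have hux : ⟪u, x⟫ = b := by
      rw [hudef, real_inner_smul_left, inner_sub_left, real_inner_smul_left, hxx, hinner_f1x]
      have h' : (1:ℝ) - a * a = b^2 := by nlinarith [hbsq]
      rw [h', sq, inv_mul_cancel_left₀ hb0.ne']
    set ψ : ℝ := Real.arcsin a with hψdef
    have hsinψ : Real.sin ψ = a :=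
      Real.sin_arcsin (by linarith [neg_abs_le a]) (by linarith [le_abs_self a])
    have hcosψ : Real.cos ψ = b := by rw [hψdef, Real.cos_arcsin]
    have hψ_le : ψ ≤ θ/2 := by
      rw [hψdef]
      calc Real.arcsin a ≤ Real.arcsin (Real.sin (θ/2)) :=
            Real.monotone_arcsin (by linarith [le_abs_self a])
        _ = θ/2 := Real.arcsin_sin (by linarith) (by linarith)
    have hψ_ge : -(θ/2) ≤ ψ := by
      rw [hψdef]
      calc -(θ/2) = Real.arcsin (Real.sin (-(θ/2))) :=
            (Real.arcsin_sin (by linarith) (by linarith)).symm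
        _ ≤ Real.arcsin a := by
            apply Real.monotone_arcsin
            rw [Real.sin_neg]
            linarith [neg_abs_le a]
    obtain ⟨t, htdef⟩ : ∃ t : ℝ, t = ψ - (if 0 ≤ a then θ/2 else -(θ/2)) := ⟨_, rfl⟩
    have ht2 : |t| ≤ θ/2 := by
      rw [htdef]
      rcases le_or_gt 0 a with h0 | h0
      · rw [if_pos h0]
        have : 0 ≤ ψ := Real.arcsin_nonneg.mpr h0
        rw [abs_le]; constructor <;> linarith
      · rw [if_neg (not_le.mpr h0)]
        have : ψ ≤ 0 := by
          rw [hψdef, ← Real.arcsin_zero]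
          exact Real.monotone_arcsin h0.le
        rw [abs_le]; constructor <;> linarith
    obtain ⟨R, hR⟩ := exists_rot f₁ u hf1 hu1 hfu t
    have hcos_t : Real.cos (θ/2) ≤ Real.cos t := by
      rw [← Real.cos_abs t]
      exact Real.cos_le_cos_of_nonneg_of_le_pi (abs_nonneg t) (by linarith) ht2
    have hrot_self : ∀ z : EuclideanSpace ℝ (Fin n), ‖z‖ = 1 →
        Real.cos (θ/2) ≤ ⟪z, R z⟫ := by
      intro z hz
      rw [hR z]
      have h1 := rotL_inner_self f₁ u hf1 hu1 hfu t z
      rw [hz] at h1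
      calc Real.cos (θ/2) ≤ Real.cos t := hcos_t
        _ = Real.cos t * 1 ^ 2 := by ring
        _ ≤ ⟪z, rotL f₁ u t z⟫ := h1
    have hcost : ∀ (z : EuclideanSpace ℝ (Fin n)) (j : Fin n), ‖z‖ = 1 →
        Real.sin θ ≤ |z j| → Real.sin (θ/2) ≤ |R z j| := by
      intro z j hz hzj
      have hz' : ‖R z‖ = 1 := by rw [LinearIsometryEquiv.norm_map]; exact hz
      have hc := cost (z := z) (z' := R z) (w := EuclideanSpace.single j (1:ℝ))
        hz hz' (by simp) hθ0.le hθ (by linarith) (by linarith) (hrot_self z hz)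
        (by rw [inner_single_one]; exact hzj)
      rw [inner_single_one] at hc
      have he : θ - θ/2 = θ/2 := by ring
      rwa [he] at hc
    have hgain : |R x k| = Real.sin (θ/2) := by
      have hf1k : f₁ k = 1 := by simp [hf1def]
      have huk : u k = 0 := by
        rw [hudef]
        simp only [PiLp.smul_apply, PiLp.sub_apply, smul_eq_mul, hf1k, ← hadef]
        ring
      have hx_rot : (R x) k = Real.cos t * a - Real.sin t * b := by
        rw [hR x, rotL_apply, hinner_f1x, hux]
        simp only [PiLp.add_apply, PiLp.smul_apply, smul_eq_mul, hf1k, huk, ← hadef]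
        ring
      have hψt : ψ - t = if 0 ≤ a then θ/2 else -(θ/2) := by rw [htdef]; ring
      have hsin : Real.cos t * Real.sin ψ - Real.sin t * Real.cos ψ
          = Real.sin (ψ - t) := by rw [Real.sin_sub]; ring
      rw [hx_rot, ← hsinψ, ← hcosψ, hsin, hψt]
      rcases le_or_gt 0 a with h0 | h0
      · rw [if_pos h0, abs_of_nonneg hsinhalf0]
      · rw [if_neg (not_le.mpr h0), Real.sin_neg, abs_neg, abs_of_nonneg hsinhalf0]
    refine ⟨R, fun b' j => hcost (y b') j (hy1 b') (hy b' j), fun j hj => ?_⟩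
    rcases Finset.mem_insert.mp hj with rfl | hj
    · rw [hgain]
    · exact hcost x j hx1 (hx j hj)

lemma allStep {n m : ℕ} : ∀ (r : ℕ) (θ : ℝ), 0 < θ → θ ≤ π / 2 →
    ∀ (s : Finset (Fin n)), sᶜ.card = r →
    ∀ (y : Fin m → EuclideanSpace ℝ (Fin n)) (x : EuclideanSpace ℝ (Fin n)),
    (∀ b, ‖y b‖ = 1) → ‖x‖ = 1 →
    (∀ b j, Real.sin θ ≤ |y b j|) → (∀ j ∈ s, Real.sin θ ≤ |x j|) →
    ∃ R : EuclideanSpace ℝ (Fin n) ≃ₗᵢ[ℝ] EuclideanSpace ℝ (Fin n),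
      (∀ b j, Real.sin (θ / 2 ^ r) ≤ |R (y b) j|) ∧
      (∀ j, Real.sin (θ / 2 ^ r) ≤ |R x j|) := by
  intro r
  induction r with
  | zero =>
    intro θ hθ0 hθ s hs y x hy1 hx1 hy hx
    have hsu : s = Finset.univ := by
      have : sᶜ = ∅ := Finset.card_eq_zero.mp hs
      rwa [Finset.compl_eq_empty_iff] at this
    refine ⟨LinearIsometryEquiv.refl ℝ _, fun b j => ?_, fun j => ?_⟩
    · simpa using hy b j
    · simpa using hx j (hsu ▸ Finset.mem_univ j)
  | succ r ih =>
    intro θ hθ0 hθ s hs y x hy1 hx1 hy hx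
    have hsne : sᶜ.Nonempty := Finset.card_pos.mp (by omega)
    obtain ⟨k, hk⟩ := hsne
    obtain ⟨R₁, hR₁y, hR₁x⟩ := oneStep hθ0 hθ y x hy1 hx1 s k hy hx
    have hcard : (insert k s)ᶜ.card = r := by
      rw [Finset.compl_insert, Finset.card_erase_of_mem (by simpa using hk)]
      omega
    obtain ⟨R₂, hR₂y, hR₂x⟩ := ih (θ/2) (by linarith) (by linarith) (insert k s) hcard
      (fun b => R₁ (y b)) (R₁ x)
      (fun b => by rw [LinearIsometryEquiv.norm_map]; exact hy1 b)
      (by rw [LinearIsometryEquiv.norm_map]; exact hx1)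
      hR₁y hR₁x
    have hdiv : θ / 2 / 2 ^ r = θ / 2 ^ (r + 1) := by
      rw [pow_succ]; ring
    refine ⟨R₁.trans R₂, fun b j => ?_, fun j => ?_⟩
    · rw [LinearIsometryEquiv.trans_apply, ← hdiv]; exact hR₂y b j
    · rw [LinearIsometryEquiv.trans_apply, ← hdiv]; exact hR₂x j

lemma exists_big_coord {n : ℕ} [NeZero n] (x : EuclideanSpace ℝ (Fin n)) (hx : ‖x‖ = 1) :
    ∃ j, (Real.sqrt n)⁻¹ ≤ |x j| := by
  have hn : 0 < n := Nat.pos_of_ne_zero (NeZero.ne n)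
  have hsum : ∑ i, x i ^ 2 = 1 := by
    have := EuclideanSpace.norm_eq x
    rw [hx] at this
    have h2 : (1:ℝ) = ∑ i, ‖x i‖ ^ 2 := by
      have h3 := congrArg (· ^ 2) this
      simp only at h3
      rw [Real.sq_sqrt (Finset.sum_nonneg fun i _ => sq_nonneg ‖x i‖)] at h3
      simpa using h3
    simpa [Real.norm_eq_abs, sq_abs] using h2.symm
  by_contra h
  push_neg at h
  have hlt : ∀ j : Fin n, x j ^ 2 < (n:ℝ)⁻¹ := by
    intro j
    have hj := h j
    have h1 : x j ^ 2 < ((Real.sqrt n)⁻¹) ^ 2 := by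
      rw [← sq_abs]
      exact pow_lt_pow_left₀ hj (abs_nonneg _) two_ne_zero
    have h2 : ((Real.sqrt n)⁻¹ : ℝ) ^ 2 = (n:ℝ)⁻¹ := by
      rw [← Real.sqrt_inv, Real.sq_sqrt (by positivity)]
    rwa [h2] at h1
  have : (1:ℝ) < 1 := by
    calc (1:ℝ) = ∑ i, x i ^ 2 := hsum.symm
      _ < ∑ _i : Fin n, (n:ℝ)⁻¹ := by
          apply Finset.sum_lt_sum_of_nonempty
          · exact Finset.univ_nonempty
          · exact fun i _ => hlt i
      _ = 1 := by
          rw [Finset.sum_const, Finset.card_univ, Fintype.card_fin, nsmul_eq_mul]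
          field_simp
  exact absurd this (lt_irrefl 1)

lemma mainLemma {n : ℕ} (hn : 2 ≤ n) :
    ∀ (m : ℕ) (w : Fin m → EuclideanSpace ℝ (Fin n)), (∀ b, ‖w b‖ = 1) →
    ∃ T : EuclideanSpace ℝ (Fin n) ≃ₗᵢ[ℝ] EuclideanSpace ℝ (Fin n),
      ∀ b j, Real.sin (Real.arcsin (Real.sqrt n)⁻¹ * (1/2 : ℝ) ^ ((n-1)*(m-1)))
        ≤ |T (w b) j| := by
  haveI : NeZero n := ⟨by omega⟩
  have hpi := Real.pi_gt_three
  have hs1 : (1:ℝ) ≤ Real.sqrt n := by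
    rw [show (1:ℝ) = Real.sqrt 1 by simp]
    exact Real.sqrt_le_sqrt (by exact_mod_cast Nat.one_le_iff_ne_zero.mpr (by omega))
  have hinv0 : (0:ℝ) < (Real.sqrt n)⁻¹ := by positivity
  have hinv1 : (Real.sqrt n)⁻¹ ≤ 1 := by
    rw [inv_le_one_iff₀]; right; exact hs1
  set A : ℝ := Real.arcsin (Real.sqrt n)⁻¹ with hAdef
  have hA0 : 0 < A := Real.arcsin_pos.mpr hinv0
  have hApi : A ≤ π/2 := Real.arcsin_le_pi_div_two _
  have hsinA : Real.sin A = (Real.sqrt n)⁻¹ :=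
    Real.sin_arcsin (by linarith) hinv1
  intro m
  induction m with
  | zero => exact fun w hw => ⟨LinearIsometryEquiv.refl ℝ _, fun b => b.elim0⟩
  | succ m ih =>
    intro w hw
    rcases Nat.eq_zero_or_pos m with rfl | hm
    · -- single vector : reflection to the diagonal unit vector
      set u₀ : EuclideanSpace ℝ (Fin n) := WithLp.toLp 2 (fun _ => (Real.sqrt n)⁻¹) with hu₀def
      have hu₀ : ‖u₀‖ = 1 := by
        rw [EuclideanSpace.norm_eq]
        have : ∀ i : Fin n, ‖u₀ i‖ ^ 2 = (n:ℝ)⁻¹ := by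
          intro i
          have hui : u₀ i = (Real.sqrt (n:ℝ))⁻¹ := rfl
          rw [hui, Real.norm_eq_abs, sq_abs, ← Real.sqrt_inv,
            Real.sq_sqrt (by positivity)]
        rw [Fintype.sum_congr _ _ this, Finset.sum_const, Finset.card_univ,
          Fintype.card_fin, nsmul_eq_mul]
        rw [mul_inv_cancel₀ (by exact_mod_cast (by omega : n ≠ 0)), Real.sqrt_one]
      refine ⟨Submodule.reflection (ℝ ∙ (w 0 - u₀))ᗮ, fun b j => ?_⟩
      have hb0 : b = 0 := Fin.ext (by omega)
      have hT : Submodule.reflection (ℝ ∙ (w 0 - u₀))ᗮ (w 0) = u₀ :=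
        Submodule.reflection_sub (by rw [hw 0, hu₀])
      rw [hb0, hT]
      have : |u₀ j| = (Real.sqrt n)⁻¹ := by
        rw [hu₀def]; exact abs_of_pos hinv0
      rw [this]
      simp only [Nat.sub_self, Nat.mul_zero, pow_zero, mul_one]
      rw [hsinA]
    · -- at least two vectors
      obtain ⟨p, rfl⟩ : ∃ p, m = p + 1 := ⟨m - 1, by omega⟩
      obtain ⟨T₀, hT₀⟩ := ih (fun b => w b.castSucc) (fun b => hw _)
      set θ : ℝ := A * (1/2 : ℝ) ^ ((n-1)*p) with hθdef
      have hfac0 : (0:ℝ) < (1/2 : ℝ) ^ ((n-1)*p) := by positivity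
      have hfac1 : ((1/2 : ℝ) : ℝ) ^ ((n-1)*p) ≤ 1 :=
        pow_le_one₀ (by norm_num) (by norm_num)
      have hθ0 : 0 < θ := by positivity
      have hθA : θ ≤ A := by
        rw [hθdef]
        exact mul_le_of_le_one_right hA0.le hfac1
      have hθpi : θ ≤ π/2 := hθA.trans hApi
      have hsinθ : Real.sin θ ≤ (Real.sqrt n)⁻¹ := by
        rw [← hsinA]
        exact sin_mono (by linarith) hApi hθA
      set x : EuclideanSpace ℝ (Fin n) := T₀ (w (Fin.last (p+1))) with hxdef
      have hx1 : ‖x‖ = 1 := by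
        rw [hxdef, LinearIsometryEquiv.norm_map]; exact hw _
      obtain ⟨j₀, hj₀⟩ := exists_big_coord x hx1
      have hcard : ({j₀} : Finset (Fin n))ᶜ.card = n - 1 := by
        rw [Finset.card_compl, Finset.card_singleton, Fintype.card_fin]
      obtain ⟨R, hRy, hRx⟩ := allStep (n-1) θ hθ0 hθpi {j₀} hcard
        (fun b => T₀ (w b.castSucc)) x
        (fun b => by rw [LinearIsometryEquiv.norm_map]; exact hw _) hx1
        (fun b j => hT₀ b j)
        (fun j hj => by
          rw [Finset.mem_singleton] at hj
          subst hj
          exact le_trans (hsinθ.trans hj₀) le_rfl)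
      have hkey : θ / 2 ^ (n-1) = A * (1/2 : ℝ) ^ ((n-1)*(p+1)) := by
        have hexp : (n-1)*(p+1) = (n-1)*p + (n-1) := by ring
        rw [hθdef, hexp, pow_add]
        rw [div_pow, one_pow, div_pow, one_pow]
        field_simp
      refine ⟨T₀.trans R, fun b j => ?_⟩
      have hgoal : (n - 1) * (p + 1 + 1 - 1) = (n-1)*(p+1) := by
        have h' : p + 1 + 1 - 1 = p + 1 := by omega
        rw [h']
      rw [hgoal]
      rw [← hkey]
      refine Fin.lastCases ?_ ?_ b
      · rw [LinearIsometryEquiv.trans_apply]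
        exact hRx j
      · intro c
        rw [LinearIsometryEquiv.trans_apply]
        exact hRy c j

/-- Basis-choice angle lemma: given at most `Q(Q−1)` unit directions in `ℝⁿ` (`n,Q ≥ 2`),
there is an orthonormal basis `{e_α}` such that every direction makes angle at least
`θ₀ = arcsin(1/√n)·(1/2)^{(n−1)(Q(Q−1)−1)}` with every coordinate hyperplane, i.e.
`|⟨e_α, v_b⟩| ≥ sin θ₀` for all `α, b`. -/
theorem stmt_4 (n Q ℓ : ℕ) (hn : 2 ≤ n) (hQ : 2 ≤ Q) (hℓ : ℓ ≤ Q * (Q - 1))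
    (v : Fin ℓ → EuclideanSpace ℝ (Fin n)) (hv : ∀ b, ‖v b‖ = 1) :
    ∃ e : OrthonormalBasis (Fin n) ℝ (EuclideanSpace ℝ (Fin n)),
      ∀ (α : Fin n) (b : Fin ℓ),
        Real.sin (Real.arcsin (1 / Real.sqrt n) *
            (1 / 2 : ℝ) ^ ((n - 1) * (Q * (Q - 1) - 1)))
          ≤ |(⟪e α, v b⟫)| := by
  obtain ⟨T, hT⟩ := mainLemma hn ℓ v hv
  refine ⟨(EuclideanSpace.basisFun (Fin n) ℝ).map T.symm, fun α b => ?_⟩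
  have hpi := Real.pi_gt_three
  have happ : (((EuclideanSpace.basisFun (Fin n) ℝ).map T.symm) α)
      = T.symm (EuclideanSpace.single α 1) := by
    rw [OrthonormalBasis.map_apply, EuclideanSpace.basisFun_apply]
  have hip : ⟪((EuclideanSpace.basisFun (Fin n) ℝ).map T.symm) α, v b⟫ = T (v b) α := by
    rw [happ]
    calc ⟪T.symm (EuclideanSpace.single α 1), v b⟫
        = ⟪T (T.symm (EuclideanSpace.single α 1)), T (v b)⟫ :=
          (T.inner_map_map _ _).symm
      _ = ⟪EuclideanSpace.single α (1:ℝ), T (v b)⟫ := by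
          rw [T.apply_symm_apply]
      _ = T (v b) α := inner_single_one α _
  rw [hip]
  -- monotonicity in the exponent
  have hs1 : (1:ℝ) ≤ Real.sqrt n := by
    rw [show (1:ℝ) = Real.sqrt 1 by simp]
    exact Real.sqrt_le_sqrt (by exact_mod_cast (by omega : 1 ≤ n))
  have hinv0 : (0:ℝ) < (Real.sqrt n)⁻¹ := by positivity
  have hinv1 : (Real.sqrt n)⁻¹ ≤ 1 := by rw [inv_le_one_iff₀]; right; exact hs1
  have hA0 : 0 < Real.arcsin (Real.sqrt n)⁻¹ := Real.arcsin_pos.mpr hinv0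
  have hApi : Real.arcsin (Real.sqrt n)⁻¹ ≤ π/2 := Real.arcsin_le_pi_div_two _
  have hone : 1 / Real.sqrt n = (Real.sqrt n)⁻¹ := one_div _
  rw [hone]
  have hexp : (n - 1) * (ℓ - 1) ≤ (n - 1) * (Q * (Q - 1) - 1) :=
    Nat.mul_le_mul_left _ (by omega)
  have hpow : ((1:ℝ)/2) ^ ((n - 1) * (Q * (Q - 1) - 1)) ≤ ((1:ℝ)/2) ^ ((n - 1) * (ℓ - 1)) :=
    pow_le_pow_of_le_one (by norm_num) (by norm_num) hexp
  have hle : Real.arcsin (Real.sqrt n)⁻¹ * ((1:ℝ)/2) ^ ((n - 1) * (Q * (Q - 1) - 1))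
      ≤ Real.arcsin (Real.sqrt n)⁻¹ * ((1:ℝ)/2) ^ ((n - 1) * (ℓ - 1)) :=
    mul_le_mul_of_nonneg_left hpow hA0.le
  have hup : Real.arcsin (Real.sqrt n)⁻¹ * ((1:ℝ)/2) ^ ((n - 1) * (ℓ - 1)) ≤ π/2 := by
    have h1 : ((1:ℝ)/2) ^ ((n - 1) * (ℓ - 1)) ≤ 1 := pow_le_one₀ (by norm_num) (by norm_num)
    calc Real.arcsin (Real.sqrt n)⁻¹ * ((1:ℝ)/2) ^ ((n - 1) * (ℓ - 1))
        ≤ Real.arcsin (Real.sqrt n)⁻¹ * 1 := mul_le_mul_of_nonneg_left h1 hA0.le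
      _ = Real.arcsin (Real.sqrt n)⁻¹ := mul_one _
      _ ≤ π/2 := hApi
  have hlow : -(π/2) ≤ Real.arcsin (Real.sqrt n)⁻¹ *
      ((1:ℝ)/2) ^ ((n - 1) * (Q * (Q - 1) - 1)) := by
    have h0 : (0:ℝ) ≤ Real.arcsin (Real.sqrt n)⁻¹ *
        ((1:ℝ)/2) ^ ((n - 1) * (Q * (Q - 1) - 1)) := by positivity
    linarith [Real.pi_pos]
  exact le_trans (sin_mono hlow hup hle) (hT b α)
end
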